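/- Let $a \in \mathbb{R}$, $a \ne 0$, $\epsilon = \pm 1$, and define $T_a : (-\frac{1}{\sqrt{12\pi}}, \frac{1}{\sqrt{12\pi}}) \to \mathbb{R}$ by $T_a(\phi_0) = \phi_0 / \sqrt{1 - 12\pi\phi_0^2}$. Suppose $\Phi_0$ satisfies $T_1(\Phi_0(\phi_0)) = \epsilon a^{-1} T_1(\phi_0)$ for all $\phi_0$. Then $\Phi_0(\phi_0) = \epsilon a^{-1} \phi_0 (1 + 12\pi\phi_0^2(a^{-2} - 1))^{-1/2}$, and this map is a bijection of the open interval $(-\frac{1}{\sqrt{12\pi}}, \frac{1}{\sqrt{12\pi}})$ onto itself. -/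

import Mathlib

lemma memI_iff (b : ℝ) (hb : 0 < b) (y : ℝ) :
    y ∈ Set.Ioo (-(1 / Real.sqrt b)) (1 / Real.sqrt b) ↔ b * y ^ 2 < 1 := by
  have hr : 0 < Real.sqrt b := Real.sqrt_pos.mpr hb
  have h1 : Real.sqrt b ^ 2 = b := Real.sq_sqrt hb.le
  have hrpos : 0 < 1 / Real.sqrt b := by positivity
  have hr2 : b * (1 / Real.sqrt b) ^ 2 = 1 := by
    rw [div_pow, one_pow, h1]; field_simp
  simp only [Set.mem_Ioo]
  constructor
  · rintro ⟨h2, h3⟩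
    nlinarith [mul_pos (sub_pos.mpr h3) (by linarith : (0:ℝ) < 1 / Real.sqrt b + y)]
  · intro h
    have hy2 : y ^ 2 < (1 / Real.sqrt b) ^ 2 := by nlinarith
    constructor <;> nlinarith

lemma keyT (b : ℝ) (hb : 0 < b) (y : ℝ) (hy : b * y ^ 2 < 1) :
    (y / Real.sqrt (1 - b * y ^ 2)) /
      Real.sqrt (1 + b * (y / Real.sqrt (1 - b * y ^ 2)) ^ 2) = y := by
  have hs : 0 < 1 - b * y ^ 2 := by linarith
  have hss : 0 < Real.sqrt (1 - b * y ^ 2) := Real.sqrt_pos.mpr hs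
  have h1 : Real.sqrt (1 - b * y ^ 2) ^ 2 = 1 - b * y ^ 2 := Real.sq_sqrt hs.le
  have h2 : 1 + b * (y / Real.sqrt (1 - b * y ^ 2)) ^ 2 = 1 / (1 - b * y ^ 2) := by
    field_simp
    rw [h1]; ring
  rw [h2, one_div, Real.sqrt_inv]
  field_simp
  rw [mul_div_assoc, div_self (by rw [mul_comm (y ^ 2) b]; exact hss.ne'), mul_one]

lemma keyS (b : ℝ) (hb : 0 < b) (t : ℝ) :
    b * (t / Real.sqrt (1 + b * t ^ 2)) ^ 2 < 1 ∧
      (t / Real.sqrt (1 + b * t ^ 2)) /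
        Real.sqrt (1 - b * (t / Real.sqrt (1 + b * t ^ 2)) ^ 2) = t := by
  have hs : 0 < 1 + b * t ^ 2 := by positivity
  have hss : 0 < Real.sqrt (1 + b * t ^ 2) := Real.sqrt_pos.mpr hs
  have h1 : Real.sqrt (1 + b * t ^ 2) ^ 2 = 1 + b * t ^ 2 := Real.sq_sqrt hs.le
  have h2 : b * (t / Real.sqrt (1 + b * t ^ 2)) ^ 2 = b * t ^ 2 / (1 + b * t ^ 2) := by
    field_simp
    rw [h1]
  constructor
  · rw [h2]
    rw [div_lt_one hs]; nlinarith
  · rw [h2]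
    have h3 : 1 - b * t ^ 2 / (1 + b * t ^ 2) = 1 / (1 + b * t ^ 2) := by field_simp; ring
    rw [h3, one_div, Real.sqrt_inv]
    field_simp

lemma comb (b : ℝ) (hb : 0 < b) (c y : ℝ) (hy : b * y ^ 2 < 1) :
    c * (y / Real.sqrt (1 - b * y ^ 2)) /
      Real.sqrt (1 + b * (c * (y / Real.sqrt (1 - b * y ^ 2))) ^ 2) =
    c * y / Real.sqrt (1 + b * y ^ 2 * (c ^ 2 - 1)) := by
  have hs : 0 < 1 - b * y ^ 2 := by linarith
  have hss : 0 < Real.sqrt (1 - b * y ^ 2) := Real.sqrt_pos.mpr hs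
  have h1 : Real.sqrt (1 - b * y ^ 2) ^ 2 = 1 - b * y ^ 2 := Real.sq_sqrt hs.le
  have hD : 0 < 1 + b * y ^ 2 * (c ^ 2 - 1) := by nlinarith [sq_nonneg (c * y)]
  have h2 : 1 + b * (c * (y / Real.sqrt (1 - b * y ^ 2))) ^ 2 =
      (1 + b * y ^ 2 * (c ^ 2 - 1)) / (1 - b * y ^ 2) := by
    field_simp
    nlinarith
  rw [h2, Real.sqrt_div hD.le]
  have hDD : 0 < Real.sqrt (1 + b * y ^ 2 * (c ^ 2 - 1)) := Real.sqrt_pos.mpr hD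
  field_simp
  have hA : Real.sqrt (1 - y ^ 2 * b) ≠ 0 := by rw [mul_comm (y ^ 2) b]; exact hss.ne'
  rw [mul_comm (Real.sqrt (1 - y ^ 2 * b)) _, mul_div_mul_right _ _ hA]

/-- If `Φ₀` maps the open interval `I = (-1/√(12π), 1/√(12π))` to itself and
satisfies `T(Φ₀(φ₀)) = ε a⁻¹ T(φ₀)` where `T(y) = y/√(1 - 12π y²)`, then
`Φ₀(φ₀) = ε a⁻¹ φ₀ (1 + 12π φ₀² (a⁻² - 1))^{-1/2}` and `Φ₀` is a bijection of
`I` onto itself. -/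
theorem stmt_14 (a ε : ℝ) (ha : a ≠ 0) (hε : ε = 1 ∨ ε = -1) (Φ₀ : ℝ → ℝ)
    (hmaps : ∀ φ₀ ∈ Set.Ioo (-(1 / Real.sqrt (12 * Real.pi))) (1 / Real.sqrt (12 * Real.pi)),
      Φ₀ φ₀ ∈ Set.Ioo (-(1 / Real.sqrt (12 * Real.pi))) (1 / Real.sqrt (12 * Real.pi)))
    (hT : ∀ φ₀ ∈ Set.Ioo (-(1 / Real.sqrt (12 * Real.pi))) (1 / Real.sqrt (12 * Real.pi)),
      Φ₀ φ₀ / Real.sqrt (1 - 12 * Real.pi * (Φ₀ φ₀) ^ 2) =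
        ε * a⁻¹ * (φ₀ / Real.sqrt (1 - 12 * Real.pi * φ₀ ^ 2))) :
    (∀ φ₀ ∈ Set.Ioo (-(1 / Real.sqrt (12 * Real.pi))) (1 / Real.sqrt (12 * Real.pi)),
      Φ₀ φ₀ = ε * a⁻¹ * φ₀ / Real.sqrt (1 + 12 * Real.pi * φ₀ ^ 2 * (a⁻¹ ^ 2 - 1))) ∧
    Set.BijOn Φ₀
      (Set.Ioo (-(1 / Real.sqrt (12 * Real.pi))) (1 / Real.sqrt (12 * Real.pi)))
      (Set.Ioo (-(1 / Real.sqrt (12 * Real.pi))) (1 / Real.sqrt (12 * Real.pi))) := by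
  have hb : 0 < 12 * Real.pi := by positivity
  have hεne : ε ≠ 0 := by rcases hε with h | h <;> rw [h] <;> norm_num
  have hcne : ε * a⁻¹ ≠ 0 := mul_ne_zero hεne (inv_ne_zero ha)
  have hc2 : (ε * a⁻¹) ^ 2 = a⁻¹ ^ 2 := by rcases hε with h | h <;> rw [h] <;> ring
  constructor
  · intro φ₀ hmem
    have hy := (memI_iff _ hb φ₀).mp hmem
    have hz := (memI_iff _ hb _).mp (hmaps φ₀ hmem)
    have h1 := keyT _ hb (Φ₀ φ₀) hz
    rw [hT φ₀ hmem] at h1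
    rw [comb _ hb (ε * a⁻¹) φ₀ hy, hc2] at h1
    exact h1.symm
  · refine ⟨hmaps, ?_, ?_⟩
    · intro x hx y hyI heq
      have hx2 := (memI_iff _ hb x).mp hx
      have hy2 := (memI_iff _ hb y).mp hyI
      have e1 : x / Real.sqrt (1 - 12 * Real.pi * x ^ 2) =
          y / Real.sqrt (1 - 12 * Real.pi * y ^ 2) :=
        mul_left_cancel₀ hcne (by rw [← hT x hx, ← hT y hyI, heq])
      calc x = _ := (keyT _ hb x hx2).symm
        _ = _ := by rw [e1]
        _ = y := keyT _ hb y hy2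
    · intro z hzI
      have hz2 := (memI_iff _ hb z).mp hzI
      set t : ℝ := (ε * a⁻¹)⁻¹ * (z / Real.sqrt (1 - 12 * Real.pi * z ^ 2)) with ht
      set φ : ℝ := t / Real.sqrt (1 + 12 * Real.pi * t ^ 2) with hφ
      obtain ⟨hφ2, hTφ⟩ := keyS (12 * Real.pi) hb t
      have hφI : φ ∈ Set.Ioo (-(1 / Real.sqrt (12 * Real.pi))) (1 / Real.sqrt (12 * Real.pi)) :=
        (memI_iff _ hb φ).mpr hφ2
      refine ⟨φ, hφI, ?_⟩
      have hΦ2 := (memI_iff _ hb _).mp (hmaps φ hφI)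
      have e2 : Φ₀ φ / Real.sqrt (1 - 12 * Real.pi * (Φ₀ φ) ^ 2) =
          z / Real.sqrt (1 - 12 * Real.pi * z ^ 2) := by
        rw [hT φ hφI, hTφ, ht, mul_inv_cancel_left₀ hcne]
      calc Φ₀ φ = _ := (keyT _ hb (Φ₀ φ) hΦ2).symm
        _ = _ := by rw [e2]
        _ = z := keyT _ hb z hz2
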